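/- arXiv:q-alg/9703012 — 2 statements merged into one kernel-verified Lean document; each statement's English description precedes it below -/
import Mathlib

section
/- For all m, n ∈ ℤ, the commutator e_m e_n − e_n e_m lies in ℏ·U; consequently the quotient ℂ-algebra U/ℏU is commutative. -/
open scoped TensorProduct

noncomputable section

/-- The base ring `R = ℂ[[ℏ]]`. -/
abbrev R : Type := PowerSeries ℂ

/-- The formal variable `ℏ ∈ ℂ[[ℏ]]`. -/
def hbar : R := PowerSeries.X

/-- The generators `e_n` of the free algebra. -/
def E (n : ℤ) : FreeAlgebra R ℤ := FreeAlgebra.ι R n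

/-- The defining relations of `U_ℏ𝔫₊`:
`e_{m+1}e_n − e_n e_{m+1} − e_m e_{n+1} + e_{n+1}e_m = ℏ(e_m e_n + e_n e_m)`. -/
inductive ERel : FreeAlgebra R ℤ → FreeAlgebra R ℤ → Prop
  | current (m n : ℤ) :
      ERel (E (m + 1) * E n - E n * E (m + 1) - E m * E (n + 1) + E (n + 1) * E m)
        (hbar • (E m * E n + E n * E m))

/-- `U = U_ℏ𝔫₊`, the quotient of the free `R`-algebra on the `e_n`, `n ∈ ℤ`,
by the two-sided ideal generated by the defining relations. -/
abbrev U : Type := RingQuot ERel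

/-- The image of `e_n` in `U`. -/
def e (n : ℤ) : U := RingQuot.mkAlgHom R ERel (E n)

/-- `U^{≥0}`, the `R`-subalgebra of `U` generated by the `e_n` with `n ≥ 0`. -/
def Uge : Subalgebra R U := Algebra.adjoin R (Set.range fun n : ℕ => e (n : ℤ))

/-- `U^{<0}`, the `R`-subalgebra of `U` generated by the `e_n` with `n < 0`. -/
def Ult : Subalgebra R U := Algebra.adjoin R {x : U | ∃ n : ℤ, n < 0 ∧ x = e n}

section GenericRing
variable {A : Type*} [Ring A]

lemma gsub4 (a b c d : A) : (a - b) - (c - d) = a - b - c + d := by abel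
lemma gsub3 (x y w : A) : x - w = (x - y) - (w - y) := by abel
lemma gadd3 (x y w : A) : x - w = (x - y) + (y - w) := by abel
lemma gsubself (x y : A) : x - (y - y) = x := by abel
lemma gdouble (p q : A) : (p - q) + (p - q) = (p - q) - (q - p) := by abel
lemma gsplit (x y : A) : x = (x - y) + y := by abel
lemma gzero (t s : A) (h : t = s) : t - s = 0 := by rw [h, sub_self]
lemma gleib1 (a b y : A) : a * b * y - y * (a * b)
    = a * (b * y - y * b) + (a * y - y * a) * b := by noncomm_ring
lemma gleib2 (a b x : A) : x * (a * b) - a * b * x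
    = (x * a - a * x) * b + a * (x * b - b * x) := by noncomm_ring
lemma gaddl (a b y : A) : (a + b) * y - y * (a + b)
    = (a * y - y * a) + (b * y - y * b) := by noncomm_ring
lemma gaddr (a b x : A) : x * (a + b) - (a + b) * x
    = (x * a - a * x) + (x * b - b * x) := by noncomm_ring

end GenericRing

/-- `ℏ·U` as an `R`-submodule of `U`. -/
def Ihb : Submodule R U := LinearMap.range (LinearMap.lsmul R U hbar)

lemma mem_Ihb_iff {x : U} : x ∈ Ihb ↔ ∃ u : U, x = hbar • u := by
  constructor
  · rintro ⟨u, rfl⟩; exact ⟨u, rfl⟩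
  · rintro ⟨u, rfl⟩; exact ⟨u, rfl⟩

lemma smul_mem_Ihb (u : U) : hbar • u ∈ Ihb := ⟨u, rfl⟩

lemma Ihb_sub_mem {x y : U} (hx : x ∈ Ihb) (hy : y ∈ Ihb) : x - y ∈ Ihb := by
  obtain ⟨u, rfl⟩ := mem_Ihb_iff.mp hx
  obtain ⟨v, rfl⟩ := mem_Ihb_iff.mp hy
  exact mem_Ihb_iff.mpr ⟨u - v, (smul_sub hbar u v).symm⟩

lemma Ihb_mul_left (a : U) {x : U} (h : x ∈ Ihb) : a * x ∈ Ihb := by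
  obtain ⟨u, rfl⟩ := mem_Ihb_iff.mp h
  exact mem_Ihb_iff.mpr ⟨a * u, by rw [mul_smul_comm]⟩

lemma Ihb_mul_right (a : U) {x : U} (h : x ∈ Ihb) : x * a ∈ Ihb := by
  obtain ⟨u, rfl⟩ := mem_Ihb_iff.mp h
  exact mem_Ihb_iff.mpr ⟨u * a, by rw [smul_mul_assoc]⟩

lemma half_mem_Ihb {x : U} (h : x + x ∈ Ihb) : x ∈ Ihb := by
  obtain ⟨u, hu⟩ := mem_Ihb_iff.mp h
  refine mem_Ihb_iff.mpr ⟨algebraMap ℂ R (2⁻¹ : ℂ) • u, ?_⟩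
  have h2 : (algebraMap ℂ R (2⁻¹ : ℂ)) • (x + x) = x := by
    rw [← two_smul R x, smul_smul]
    have h21 : algebraMap ℂ R (2⁻¹ : ℂ) * 2 = 1 := by
      rw [← map_ofNat (algebraMap ℂ R) 2, ← map_mul]
      norm_num
    rw [h21, one_smul]
  rw [← h2, hu]
  exact smul_comm _ _ _

/-- The key consequence of the defining relation, mod `ℏ`. -/
lemma shift1 (m n : ℤ) :
    (e (m + 1) * e n - e n * e (m + 1)) - (e m * e (n + 1) - e (n + 1) * e m) ∈ Ihb := by
  have h := RingQuot.mkAlgHom_rel R (ERel.current m n)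
  simp only [map_add, map_sub, map_mul, map_smul] at h
  have hid : (e (m + 1) * e n - e n * e (m + 1)) - (e m * e (n + 1) - e (n + 1) * e m)
      = e (m + 1) * e n - e n * e (m + 1) - e m * e (n + 1) + e (n + 1) * e m :=
    by exact gsub4 (A := U) _ _ _ _
  rw [hid]
  unfold e
  rw [h]
  exact smul_mem_Ihb _

lemma shiftk (m n k : ℤ) :
    (e m * e n - e n * e m) - (e (m + k) * e (n - k) - e (n - k) * e (m + k)) ∈ Ihb := by
  induction k using Int.induction_on with
  | zero =>
    rw [add_zero, sub_zero]
    have hid : (e m * e n - e n * e m) - (e m * e n - e n * e m) = 0 := by exact gzero (A := U) _ _ rfl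
    rw [hid]
    exact Ihb.zero_mem
  | succ k ih =>
    have h2 := shift1 (m + k) (n - k - 1)
    have e1 : m + ((k : ℤ) + 1) = (m + k) + 1 := by ring
    have e2 : n - ((k : ℤ) + 1) = n - k - 1 := by ring
    have e3 : n - (k : ℤ) - 1 + 1 = n - k := by ring
    rw [e1, e2]
    rw [e3] at h2
    have hid : (e m * e n - e n * e m)
        - (e (m + k + 1) * e (n - k - 1) - e (n - k - 1) * e (m + k + 1))
        = ((e m * e n - e n * e m) - (e (m + k) * e (n - k) - e (n - k) * e (m + k)))
        - ((e (m + k + 1) * e (n - k - 1) - e (n - k - 1) * e (m + k + 1))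
            - (e (m + k) * e (n - k) - e (n - k) * e (m + k))) :=
      by exact gsub3 (A := U) _ _ _
    rw [hid]
    exact Ihb_sub_mem ih h2
  | pred k ih =>
    have h2 := shift1 (m - k - 1) (n + k)
    have e1 : m + (-(k : ℤ) - 1) = m - k - 1 := by ring
    have e2 : n - (-(k : ℤ) - 1) = n + k + 1 := by ring
    have e3 : m - (k : ℤ) - 1 + 1 = m + -(k : ℤ) := by ring
    have e4 : n - -(k : ℤ) = n + k := by ring
    rw [e1, e2]
    rw [e3] at h2
    rw [e4] at ih
    have hid : (e m * e n - e n * e m)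
        - (e (m - k - 1) * e (n + k + 1) - e (n + k + 1) * e (m - k - 1))
        = ((e m * e n - e n * e m)
            - (e (m + -(k:ℤ)) * e (n + (k:ℤ)) - e (n + (k:ℤ)) * e (m + -(k:ℤ))))
        + ((e (m + -(k:ℤ)) * e (n + (k:ℤ)) - e (n + (k:ℤ)) * e (m + -(k:ℤ)))
            - (e (m - k - 1) * e (n + k + 1) - e (n + k + 1) * e (m - k - 1))) := by
      exact gadd3 (A := U) _ _ _
    rw [hid]
    exact Ihb.add_mem ih h2

lemma comm_e_mem (m n : ℤ) : e m * e n - e n * e m ∈ Ihb := by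
  rcases Int.even_or_odd (m + n) with ⟨k, hk⟩ | ⟨k, hk⟩
  · have h := shiftk m n (k - m)
    have e1 : m + (k - m) = k := by ring
    have e2 : n - (k - m) = k := by omega
    rw [e1, e2] at h
    have hid : e m * e n - e n * e m
        = (e m * e n - e n * e m) - (e k * e k - e k * e k) := by exact (gsubself (A := U) _ _).symm
    rw [hid]
    exact h
  · have hkk : e k * e (k + 1) - e (k + 1) * e k ∈ Ihb := by
      have h := shiftk k (k + 1) 1
      have e2 : k + 1 - 1 = k := by ring
      rw [e2] at h
      apply half_mem_Ihb
      have hid : (e k * e (k + 1) - e (k + 1) * e k) + (e k * e (k + 1) - e (k + 1) * e k)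
          = (e k * e (k + 1) - e (k + 1) * e k) - (e (k + 1) * e k - e k * e (k + 1)) :=
        by exact gdouble (A := U) _ _
      rw [hid]
      exact h
    have h := shiftk m n (k - m)
    have e1 : m + (k - m) = k := by ring
    have e2 : n - (k - m) = k + 1 := by omega
    rw [e1, e2] at h
    have hid : e m * e n - e n * e m
        = ((e m * e n - e n * e m) - (e k * e (k + 1) - e (k + 1) * e k))
        + (e k * e (k + 1) - e (k + 1) * e k) := by exact gsplit (A := U) _ _
    rw [hid]
    exact Ihb.add_mem h hkk

lemma comm_mem (x y : U) : x * y - y * x ∈ Ihb := by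
  have key : ∀ x : U, ∀ n : ℤ, x * e n - e n * x ∈ Ihb := by
    intro x n
    obtain ⟨a, rfl⟩ := RingQuot.mkAlgHom_surjective R ERel x
    induction a using FreeAlgebra.induction with
    | grade0 r =>
      rw [AlgHom.commutes]
      have hid : (algebraMap R U r) * e n - e n * (algebraMap R U r) = 0 := by
        exact gzero (A := U) _ _ (Algebra.commutes r (e n))
      rw [hid]
      exact Ihb.zero_mem
    | grade1 i => exact comm_e_mem i n
    | mul a b ha hb =>
      rw [map_mul]
      have hid : (RingQuot.mkAlgHom R ERel) a * (RingQuot.mkAlgHom R ERel) b * e n - e n * ((RingQuot.mkAlgHom R ERel) a * (RingQuot.mkAlgHom R ERel) b)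
          = (RingQuot.mkAlgHom R ERel) a * ((RingQuot.mkAlgHom R ERel) b * e n - e n * (RingQuot.mkAlgHom R ERel) b)
            + ((RingQuot.mkAlgHom R ERel) a * e n - e n * (RingQuot.mkAlgHom R ERel) a) * (RingQuot.mkAlgHom R ERel) b := by
        exact gleib1 (A := U) _ _ _
      rw [hid]
      exact Ihb.add_mem (Ihb_mul_left _ hb) (Ihb_mul_right _ ha)
    | add a b ha hb =>
      rw [map_add]
      have hid : ((RingQuot.mkAlgHom R ERel) a + (RingQuot.mkAlgHom R ERel) b) * e n - e n * ((RingQuot.mkAlgHom R ERel) a + (RingQuot.mkAlgHom R ERel) b)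
          = ((RingQuot.mkAlgHom R ERel) a * e n - e n * (RingQuot.mkAlgHom R ERel) a) + ((RingQuot.mkAlgHom R ERel) b * e n - e n * (RingQuot.mkAlgHom R ERel) b) := by
        exact gaddl (A := U) _ _ _
      rw [hid]
      exact Ihb.add_mem ha hb
  obtain ⟨b, rfl⟩ := RingQuot.mkAlgHom_surjective R ERel y
  induction b using FreeAlgebra.induction with
  | grade0 r =>
    rw [AlgHom.commutes]
    have hid : x * (algebraMap R U r) - (algebraMap R U r) * x = 0 := by
      exact gzero (A := U) _ _ (Algebra.commutes r x).symm
    rw [hid]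
    exact Ihb.zero_mem
  | grade1 i => exact key x i
  | mul a b ha hb =>
    rw [map_mul]
    have hid : x * ((RingQuot.mkAlgHom R ERel) a * (RingQuot.mkAlgHom R ERel) b) - (RingQuot.mkAlgHom R ERel) a * (RingQuot.mkAlgHom R ERel) b * x
        = (x * (RingQuot.mkAlgHom R ERel) a - (RingQuot.mkAlgHom R ERel) a * x) * (RingQuot.mkAlgHom R ERel) b
          + (RingQuot.mkAlgHom R ERel) a * (x * (RingQuot.mkAlgHom R ERel) b - (RingQuot.mkAlgHom R ERel) b * x) := by
      exact gleib2 (A := U) _ _ _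
    rw [hid]
    exact Ihb.add_mem (Ihb_mul_right _ ha) (Ihb_mul_left _ hb)
  | add a b ha hb =>
    rw [map_add]
    have hid : x * ((RingQuot.mkAlgHom R ERel) a + (RingQuot.mkAlgHom R ERel) b) - ((RingQuot.mkAlgHom R ERel) a + (RingQuot.mkAlgHom R ERel) b) * x
        = (x * (RingQuot.mkAlgHom R ERel) a - (RingQuot.mkAlgHom R ERel) a * x) + (x * (RingQuot.mkAlgHom R ERel) b - (RingQuot.mkAlgHom R ERel) b * x) := by
      exact gaddr (A := U) _ _ _
    rw [hid]
    exact Ihb.add_mem ha hb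

/-- for all `m, n ∈ ℤ` the commutator `e_m e_n − e_n e_m` lies in `ℏ·U`;
consequently the quotient `U/ℏU` is commutative, i.e. every commutator in `U`
lies in `ℏ·U`. -/
theorem commutator_mem_hbar_smul :
    (∀ m n : ℤ, ∃ u : U, e m * e n - e n * e m = hbar • u) ∧
      (∀ x y : U, ∃ u : U, x * y - y * x = hbar • u) := by
  constructor
  · intro m n; exact mem_Ihb_iff.mp (comm_e_mem m n)
  · intro x y; exact mem_Ihb_iff.mp (comm_mem x y)

end
end

section
/- The ℂ-algebra homomorphism from the polynomial ring ℂ[x_n : n ∈ ℤ] (in commuting indeterminates x_n indexed by ℤ) to U/ℏU sending x_n to the class of e_n is an isomorphism of ℂ-algebras; that is, U is a flat deformation of the commutative polynomial algebra ℂ[x_n, n ∈ ℤ]. -/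
open scoped TensorProduct

noncomputable section

/-- The relation killing `ℏ`: the quotient `RingQuot HRel = U/ℏU`. -/
inductive HRel : U → U → Prop
  | hbar_zero : HRel (algebraMap R U hbar) 0

/-- The quotient `ℂ`-algebra `U/ℏU`. -/
abbrev Q : Type := RingQuot HRel

/-- The class of `e_n` in `U/ℏU`. -/
def ebar (n : ℤ) : Q := RingQuot.mkAlgHom ℂ HRel (e n)

-- ### auxiliary material

instance instQRing : Ring Q := RingQuot.instRing HRel

abbrev A : Type := MvPolynomial ℤ ℂ

instance instRA : Algebra R A :=
  ((MvPolynomial.C : ℂ →+* A).comp (PowerSeries.constantCoeff (R := ℂ))).toAlgebra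

lemma algebraMap_RA (r : R) :
    algebraMap R A r = MvPolynomial.C (PowerSeries.constantCoeff (R := ℂ) r) := rfl

instance : IsScalarTower ℂ R A :=
  IsScalarTower.of_algebraMap_eq fun c => by
    simp [algebraMap_RA, PowerSeries.algebraMap_apply]

def ψfree : FreeAlgebra R ℤ →ₐ[R] A :=
  FreeAlgebra.lift R (fun n => MvPolynomial.X n)

lemma ψfree_rel : ∀ ⦃x y : FreeAlgebra R ℤ⦄, ERel x y → ψfree x = ψfree y := by
  intro x y h
  cases h with
  | current m n =>
    have h0 : ψfree (hbar • (E m * E n + E n * E m)) = 0 := by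
      rw [map_smul, Algebra.smul_def, algebraMap_RA]
      simp [hbar]
    rw [h0]
    simp only [map_add, map_sub, map_mul, ψfree, E, FreeAlgebra.lift_ι_apply]
    ring

def ψU : U →ₐ[R] A := RingQuot.liftAlgHom R ⟨ψfree, ψfree_rel⟩

def ψ : U →ₐ[ℂ] A := ψU.restrictScalars ℂ

lemma ψ_hbar : ψ (algebraMap R U hbar) = 0 := by
  have : ψU (algebraMap R U hbar) = algebraMap R A hbar := ψU.commutes hbar
  simpa [ψ, algebraMap_RA, hbar] using this

def ψQ : Q →ₐ[ℂ] A :=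
  RingQuot.liftAlgHom ℂ ⟨ψ, by
    intro x y h
    cases h with
    | hbar_zero => simpa using ψ_hbar⟩

lemma ψQ_ebar (n : ℤ) : ψQ (ebar n) = MvPolynomial.X n := by
  rw [ebar, ψQ, RingQuot.liftAlgHom_mkAlgHom_apply]
  show ψU (e n) = _
  rw [e, ψU, RingQuot.liftAlgHom_mkAlgHom_apply]
  simp [ψfree, E]

/-- the projection `FreeAlgebra R ℤ → Q`. -/
def pQ (x : FreeAlgebra R ℤ) : Q :=
  RingQuot.mkAlgHom ℂ HRel (RingQuot.mkAlgHom R ERel x)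

lemma pQ_add (a b : FreeAlgebra R ℤ) : pQ (a + b) = pQ a + pQ b := by
  unfold pQ; rw [map_add, map_add]

lemma pQ_sub (a b : FreeAlgebra R ℤ) : pQ (a - b) = pQ a - pQ b := by
  unfold pQ; rw [map_sub, map_sub]

lemma pQ_mul (a b : FreeAlgebra R ℤ) : pQ (a * b) = pQ a * pQ b := by
  unfold pQ; rw [map_mul, map_mul]

lemma pQ_surjective : Function.Surjective pQ := by
  intro q
  obtain ⟨u, rfl⟩ := RingQuot.mkAlgHom_surjective ℂ HRel q
  obtain ⟨x, rfl⟩ := RingQuot.mkAlgHom_surjective R ERel u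
  exact ⟨x, rfl⟩

lemma mkAlgHom_algebraMap (u : U) (h : u = algebraMap R U hbar) :
    RingQuot.mkAlgHom ℂ HRel u = 0 := by
  rw [h]
  simpa using RingQuot.mkAlgHom_rel ℂ HRel.hbar_zero

lemma mkQ_algebraMap (r : R) :
    RingQuot.mkAlgHom ℂ HRel (algebraMap R U r) = algebraMap R Q r := by
  simp only [RingQuot.mkAlgHom_def, RingQuot.mkRingHom_def]
  rfl

lemma pQ_algebraMap (r : R) : pQ (algebraMap R _ r) = algebraMap R Q r := by
  rw [pQ, (RingQuot.mkAlgHom R ERel).commutes r, mkQ_algebraMap]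

lemma algebraMap_hbar_zero : algebraMap R Q hbar = 0 := by
  rw [← mkQ_algebraMap]
  simpa using RingQuot.mkAlgHom_rel ℂ HRel.hbar_zero

lemma pQ_hbar_smul (x : FreeAlgebra R ℤ) : pQ (hbar • x) = 0 := by
  rw [Algebra.smul_def, pQ_mul, pQ_algebraMap, algebraMap_hbar_zero, zero_mul]

lemma pQ_E (n : ℤ) : pQ (E n) = ebar n := rfl

lemma pQ_ι (n : ℤ) : pQ (FreeAlgebra.ι R n) = ebar n := rfl

/-- the commutator of `ebar m` and `ebar n`. -/
def cbar (m n : ℤ) : Q := ebar m * ebar n - ebar n * ebar m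

lemma cbar_shift (m n : ℤ) : cbar (m + 1) n = cbar m (n + 1) := by
  have h1 : pQ (E (m + 1) * E n - E n * E (m + 1) - E m * E (n + 1) + E (n + 1) * E m)
      = pQ (hbar • (E m * E n + E n * E m)) := by
    unfold pQ
    rw [RingQuot.mkAlgHom_rel R (ERel.current m n)]
  rw [pQ_hbar_smul] at h1
  simp only [pQ_add, pQ_sub, pQ_mul, pQ_E] at h1
  apply eq_of_sub_eq_zero
  rw [← h1]
  unfold cbar
  abel

lemma cbar_shift_k (k : ℤ) (m n : ℤ) : cbar m n = cbar (m + k) (n - k) := by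
  induction k using Int.induction_on with
  | zero => simp
  | succ i ih =>
    have h := cbar_shift (m + i) (n - (i + 1))
    have h1 : m + i + 1 = m + (i + 1) := by ring
    have h2 : n - (i + 1) + 1 = n - i := by ring
    rw [h1, h2] at h
    rw [ih, ← h]
  | pred i ih =>
    have h := cbar_shift (m + (-i - 1)) (n - -i)
    have h1 : m + (-i - 1) + 1 = m + -i := by ring
    have h2 : n - -i + 1 = n - (-i - 1) := by ring
    rw [h1, h2] at h
    rw [ih, h]

lemma ebar_comm (m n : ℤ) : ebar m * ebar n = ebar n * ebar m := by
  have h := cbar_shift_k (n - m) m n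
  have h2 : m + (n - m) = n := by ring
  have h3 : n - (n - m) = m := by ring
  rw [h2, h3] at h
  have h4 : cbar m n + cbar m n = 0 := by
    have hneg : cbar n m = -cbar m n := (neg_sub (ebar m * ebar n) (ebar n * ebar m)).symm
    rw [hneg] at h
    calc cbar m n + cbar m n = -cbar m n + cbar m n := by rw [← h]
    _ = 0 := by abel
  have h5 : (2 : ℂ) • cbar m n = 0 := by rw [two_smul]; exact h4
  have h6 : cbar m n = 0 := by
    have := congrArg (fun z => ((2 : ℂ)⁻¹) • z) h5
    simpa [smul_smul] using this
  exact sub_eq_zero.mp h6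

lemma ebar_comm_all (n : ℤ) (y : Q) : ebar n * y = y * ebar n := by
  obtain ⟨b, rfl⟩ := pQ_surjective y
  induction b using FreeAlgebra.induction with
  | grade1 k => rw [pQ_ι]; exact ebar_comm n k
  | grade0 r =>
    rw [pQ_algebraMap]
    exact (Algebra.commutes r (ebar n)).symm
  | add a b ha hb => rw [pQ_add, mul_add, add_mul, ha, hb]
  | mul a b ha hb =>
    rw [pQ_mul, ← mul_assoc, ha, mul_assoc, hb, mul_assoc]

lemma Q_mul_comm (x y : Q) : x * y = y * x := by
  obtain ⟨a, rfl⟩ := pQ_surjective x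
  induction a using FreeAlgebra.induction with
  | grade1 k => rw [pQ_ι]; exact ebar_comm_all k y
  | grade0 r => rw [pQ_algebraMap]; exact Algebra.commutes r y
  | add a b ha hb => rw [pQ_add, mul_add, add_mul, ha, hb]
  | mul a b ha hb =>
    rw [pQ_mul, mul_assoc, hb, ← mul_assoc, ha, mul_assoc]

instance instQComm : CommRing Q := { instQRing with mul_comm := Q_mul_comm }

/-- the `ℂ`-algebra homomorphism `ℂ[x_n : n ∈ ℤ] → U/ℏU` sending `x_n` to
the class of `e_n` is an isomorphism of `ℂ`-algebras: `U` is a flat deformation of the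
commutative polynomial algebra `ℂ[x_n, n ∈ ℤ]`. -/
theorem mvPolynomial_to_quotient_bijective :
    ∃ φ : MvPolynomial ℤ ℂ →ₐ[ℂ] Q,
      (∀ n : ℤ, φ (MvPolynomial.X n) = ebar n) ∧ Function.Bijective φ := by
  refine ⟨MvPolynomial.aeval ebar, fun n => MvPolynomial.aeval_X _ _, ?_, ?_⟩
  · -- injective: ψQ is a left inverse
    have hleft : ∀ p : A, ψQ (MvPolynomial.aeval ebar p) = p := by
      intro p
      have : (ψQ.comp (MvPolynomial.aeval ebar) : A →ₐ[ℂ] A) = AlgHom.id ℂ A := by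
        apply MvPolynomial.algHom_ext
        intro n
        simp [ψQ_ebar]
      simpa using congrArg (fun f => f p) this
    exact Function.LeftInverse.injective hleft
  · -- surjective
    intro q
    obtain ⟨x, rfl⟩ := pQ_surjective q
    induction x using FreeAlgebra.induction with
    | grade1 n => exact ⟨MvPolynomial.X n, by simp [pQ_ι]⟩
    | grade0 r =>
      refine ⟨MvPolynomial.C (PowerSeries.constantCoeff (R := ℂ) r), ?_⟩
      have hdvd : (PowerSeries.X : R) ∣ (r - PowerSeries.C (R := ℂ) (PowerSeries.constantCoeff (R := ℂ) r)) := by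
        rw [PowerSeries.X_dvd_iff]; simp
      obtain ⟨s, hs⟩ := hdvd
      have hr : r = PowerSeries.C (R := ℂ) (PowerSeries.constantCoeff (R := ℂ) r) + PowerSeries.X * s := by
        rw [← hs]; ring
      rw [pQ_algebraMap]
      conv_rhs => rw [hr]
      rw [map_add, map_mul]
      have h0 : algebraMap R Q PowerSeries.X = 0 := algebraMap_hbar_zero
      rw [h0, zero_mul, add_zero]
      have hC : algebraMap R Q (PowerSeries.C (R := ℂ) (PowerSeries.constantCoeff (R := ℂ) r))
          = algebraMap ℂ Q (PowerSeries.constantCoeff (R := ℂ) r) := by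
        rw [IsScalarTower.algebraMap_apply ℂ R Q]
        rfl
      rw [hC]
      simp
    | add a b ha hb =>
      obtain ⟨p, hp⟩ := ha
      obtain ⟨q, hq⟩ := hb
      exact ⟨p + q, by rw [map_add, hp, hq, pQ_add]⟩
    | mul a b ha hb =>
      obtain ⟨p, hp⟩ := ha
      obtain ⟨q, hq⟩ := hb
      exact ⟨p * q, by rw [map_mul, hp, hq, pQ_mul]⟩

end
end
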